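/- For n ≥ 1, the number of σ ∈ S_{n+1} with pmp_{\underline{1}32}(σ) = 1 equals the sum of the numbers of inversions over all 132-avoiding permutations in S_n. -/

import Mathlib

/-- Number of positions that start an occurrence of 132 in `σ` (pmp of `\underline{1}32`). -/
noncomputable def pmpS132 {n : ℕ} (σ : Equiv.Perm (Fin n)) : ℕ :=
  Nat.card {i : Fin n // ∃ j k : Fin n, i < j ∧ j < k ∧ σ i < σ k ∧ σ k < σ j}

/-- `σ` avoids the pattern 132. -/
def Avoids132 {n : ℕ} (σ : Equiv.Perm (Fin n)) : Prop :=
  ¬ ∃ i j k : Fin n, i < j ∧ j < k ∧ σ i < σ k ∧ σ k < σ j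

/-- The number of inversions of `σ`. -/
noncomputable def inversions {n : ℕ} (σ : Equiv.Perm (Fin n)) : ℕ :=
  Nat.card {p : Fin n × Fin n // p.1 < p.2 ∧ σ p.2 < σ p.1}

open Fin

/-- `i` starts an occurrence of 132 in `σ`. -/
def Starts {m : ℕ} (σ : Equiv.Perm (Fin m)) (i : Fin m) : Prop :=
  ∃ j k : Fin m, i < j ∧ j < k ∧ σ i < σ k ∧ σ k < σ j

lemma pmpS132_def {m : ℕ} (σ : Equiv.Perm (Fin m)) :
    pmpS132 σ = Nat.card {i : Fin m // Starts σ i} := rfl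

variable {n : ℕ}

/-- Insert the value `v` at position `p` into `τ`. -/
def insertPerm (p v : Fin (n + 1)) (τ : Equiv.Perm (Fin n)) : Equiv.Perm (Fin (n + 1)) :=
  ((finSuccEquiv' p).trans τ.optionCongr).trans (finSuccEquiv' v).symm

@[simp] lemma insertPerm_at (p v : Fin (n + 1)) (τ : Equiv.Perm (Fin n)) :
    insertPerm p v τ p = v := by
  simp [insertPerm, finSuccEquiv'_at, finSuccEquiv'_symm_none]

@[simp] lemma insertPerm_succAbove (p v : Fin (n + 1)) (τ : Equiv.Perm (Fin n)) (d : Fin n) :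
    insertPerm p v τ (p.succAbove d) = v.succAbove (τ d) := by
  simp [insertPerm, finSuccEquiv'_succAbove, finSuccEquiv'_symm_some]
lemma starts_insert_iff (τ : Equiv.Perm (Fin n)) (hav : Avoids132 τ)
    (a b : Fin n) (hab : a < b) (hvb : τ b < τ a) (i : Fin (n + 1)) :
    Starts (insertPerm (castSucc a) (castSucc (τ b)) τ) i ↔ i = castSucc a := by
  set p : Fin (n + 1) := castSucc a with hp
  set v : Fin (n + 1) := castSucc (τ b) with hv
  set σ : Equiv.Perm (Fin (n + 1)) := insertPerm p v τ with hσ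
  constructor
  · rintro ⟨j, k, hij, hjk, h1, h2⟩
    by_contra hip
    apply hav
    obtain ⟨d, hd⟩ := exists_succAbove_eq hip
    by_cases hjp : j = p
    · -- middle element is the inserted one
      have hkp : k ≠ p := fun h => absurd hjk (by rw [h, hjp]; exact lt_irrefl p)
      obtain ⟨e, he⟩ := exists_succAbove_eq hkp
      rw [← hd, insertPerm_succAbove] at h1
      rw [← he, insertPerm_succAbove] at h1 h2
      rw [hjp, insertPerm_at] at h2
      -- h2 : v.succAbove (τ e) < v
      have he2 : castSucc (τ e) < v := (succAbove_lt_iff_castSucc_lt v (τ e)).mp h2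
      rw [succAbove_of_castSucc_lt _ _ he2] at h1 h2
      have hd2 : castSucc (τ d) < v :=
        (succAbove_lt_iff_castSucc_lt v (τ d)).mp (h1.trans h2)
      rw [succAbove_of_castSucc_lt _ _ hd2] at h1
      -- positions : i < p gives d < a
      have hda : d < a := by
        have : castSucc d < p := by
          have := (succAbove_lt_iff_castSucc_lt p d).mp (hd ▸ (hij.trans_eq hjp))
          exact this
        exact castSucc_lt_castSucc_iff.mp this
      exact ⟨d, a, b, hda, hab,
        castSucc_lt_castSucc_iff.mp (h1.trans he2), hvb⟩
    · by_cases hkp : k = p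
      · -- last element is the inserted one
        have hjp' : j ≠ p := hjp
        have hipj : i ≠ p := hip
        obtain ⟨e, he⟩ := exists_succAbove_eq hjp'
        rw [← hd, insertPerm_succAbove] at h1
        rw [hkp, insertPerm_at] at h1 h2
        rw [← he, insertPerm_succAbove] at h2
        -- h1 : v.succAbove (τ d) < v ; h2 : v < v.succAbove (τ e)
        have hd2 : castSucc (τ d) < v := (succAbove_lt_iff_castSucc_lt v (τ d)).mp h1
        rw [succAbove_of_castSucc_lt _ _ hd2] at h1
        have he2 : v ≤ castSucc (τ e) := (lt_succAbove_iff_le_castSucc v (τ e)).mp h2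
        have heb : e < a := by
          have : castSucc e < p := by
            have hjlt : j < p := hkp ▸ hjk
            exact (succAbove_lt_iff_castSucc_lt p e).mp (he ▸ hjlt)
          exact castSucc_lt_castSucc_iff.mp this
        have hde : d < e := by
          have := hd ▸ he ▸ hij
          exact (succAbove_lt_succAbove_iff).mp this
        have hbe : τ b < τ e := by
          have hle : τ b ≤ τ e := castSucc_le_castSucc_iff.mp he2
          rcases hle.lt_or_eq with h | h
          · exact h
          · exact absurd (τ.injective h) (by omega)
        exact ⟨d, e, b, hde, heb.trans hab, castSucc_lt_castSucc_iff.mp h1, hbe⟩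
      · -- none of j, k is the inserted position
        obtain ⟨e, he⟩ := exists_succAbove_eq hjp
        obtain ⟨f, hf⟩ := exists_succAbove_eq hkp
        rw [← hd, insertPerm_succAbove] at h1
        rw [← hf, insertPerm_succAbove] at h1 h2
        rw [← he, insertPerm_succAbove] at h2
        have hde : d < e := succAbove_lt_succAbove_iff.mp (hd ▸ he ▸ hij)
        have hef : e < f := succAbove_lt_succAbove_iff.mp (he ▸ hf ▸ hjk)
        exact ⟨d, e, f, hde, hef,
          (strictMono_succAbove v).lt_iff_lt.mp h1,
          (strictMono_succAbove v).lt_iff_lt.mp h2⟩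
  · rintro rfl
    refine ⟨p.succAbove a, p.succAbove b, ?_, ?_, ?_, ?_⟩
    · rw [hp, succAbove_castSucc_self]
      exact @castSucc_lt_succ _ a
    · exact succAbove_lt_succAbove_iff.mpr hab
    · rw [insertPerm_at, insertPerm_succAbove,
        succAbove_of_le_castSucc _ _ (le_refl v)]
      exact @castSucc_lt_succ _ (τ b)
    · rw [insertPerm_succAbove, insertPerm_succAbove,
        succAbove_of_le_castSucc _ _ (le_refl v),
        succAbove_of_le_castSucc _ _ (castSucc_le_castSucc_iff.mpr hvb.le)]
      exact succ_lt_succ_iff.mpr hvb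
lemma pmp_insert (τ : Equiv.Perm (Fin n)) (hav : Avoids132 τ)
    (a b : Fin n) (hab : a < b) (hvb : τ b < τ a) :
    pmpS132 (insertPerm (castSucc a) (castSucc (τ b)) τ) = 1 := by
  rw [pmpS132_def, Nat.card_eq_one_iff_exists]
  refine ⟨⟨castSucc a, (starts_insert_iff τ hav a b hab hvb _).mpr rfl⟩, ?_⟩
  rintro ⟨i, hi⟩
  exact Subtype.ext ((starts_insert_iff τ hav a b hab hvb i).mp hi)
lemma exists_preimage (σ : Equiv.Perm (Fin (n + 1))) (h : pmpS132 σ = 1) :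
    ∃ (τ : Equiv.Perm (Fin n)) (a b : Fin n), Avoids132 τ ∧ a < b ∧ τ b < τ a ∧
      insertPerm (castSucc a) (castSucc (τ b)) τ = σ := by
  rw [pmpS132_def, Nat.card_eq_one_iff_exists] at h
  obtain ⟨⟨p, hp⟩, hu⟩ := h
  have huniq : ∀ i, Starts σ i → i = p := fun i hi => congrArg Subtype.val (hu ⟨i, hi⟩)
  obtain ⟨j, k, hpj, hjk, h1, h2⟩ := hp
  have hplast : p ≠ last n := ne_of_lt (lt_of_lt_of_le (hpj.trans hjk) (le_last k))
  set a : Fin n := p.castPred hplast with ha0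
  have ha : castSucc a = p := castSucc_castPred p hplast
  have hpa_val : (a : ℕ) = (p : ℕ) := by rw [← ha, coe_castSucc]
  set v : Fin (n + 1) := σ p with hv0
  have hvlast : v ≠ last n := ne_of_lt (lt_of_lt_of_le (h1.trans h2) (le_last (σ j)))
  set w : Fin n := v.castPred hvlast with hw0
  have hw : castSucc w = v := castSucc_castPred v hvlast
  have hvw_val : (v : ℕ) = (w : ℕ) := by rw [← hw, coe_castSucc]
  -- extract τ by deleting position p / value v
  set g : Option (Fin n) ≃ Option (Fin n) :=
    ((finSuccEquiv' p).symm.trans σ).trans (finSuccEquiv' v) with hg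
  have hgnone : g none = none := by
    simp only [hg, Equiv.trans_apply, finSuccEquiv'_symm_none, ← hv0, finSuccEquiv'_at]
  set τ : Equiv.Perm (Fin n) := g.removeNone with hτ
  have key : ∀ d : Fin n, σ (p.succAbove d) = v.succAbove (τ d) := by
    intro d
    have hne : g (some d) ≠ none := by
      intro hcon
      exact (Option.some_ne_none d) (g.injective (hcon.trans hgnone.symm))
    obtain ⟨x, hx⟩ := Option.ne_none_iff_exists'.mp hne
    have hrn := Equiv.removeNone_some g ⟨x, hx⟩
    have hgd : g (some d) = finSuccEquiv' v (σ (p.succAbove d)) := by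
      simp only [hg, Equiv.trans_apply, finSuccEquiv'_symm_some]
    rw [hgd] at hrn
    have := congrArg (finSuccEquiv' v).symm hrn
    rw [Equiv.symm_apply_apply, finSuccEquiv'_symm_some] at this
    exact this.symm
  have hins : insertPerm p v τ = σ := by
    apply Equiv.ext
    intro i
    by_cases hip : i = p
    · rw [hip, insertPerm_at]
    · obtain ⟨d, hd⟩ := exists_succAbove_eq hip
      rw [← hd, insertPerm_succAbove, key]
  have hav : Avoids132 τ := by
    rintro ⟨x, y, z, hxy, hyz, hv1, hv2⟩
    have hstart : Starts σ (p.succAbove x) := by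
      refine ⟨p.succAbove y, p.succAbove z, succAbove_lt_succAbove_iff.mpr hxy,
        succAbove_lt_succAbove_iff.mpr hyz, ?_, ?_⟩
      · rw [key, key]; exact (strictMono_succAbove v) hv1
      · rw [key, key]; exact (strictMono_succAbove v) hv2
    exact succAbove_ne p x (huniq _ hstart)
  -- the position of the value w.succ
  set m : Fin (n + 1) := σ.symm w.succ with hm0
  have hσm : σ m = w.succ := σ.apply_symm_apply _
  have hmp : m ≠ p := by
    intro hcon
    have h1' : w.succ = v := by rw [← hσm, hcon]
    have := congrArg Fin.val h1'
    rw [val_succ] at this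
    omega
  have hgt_succ : ∀ t : Fin (n + 1), t ≠ m → v < σ t → w.succ < σ t := by
    intro t htm hvt
    have hle : w.succ ≤ σ t := castSucc_lt_iff_succ_le.mp (by rw [hw]; exact hvt)
    rcases hle.lt_or_eq with h' | h'
    · exact h'
    · exact absurd (σ.injective (hσm.trans h')).symm htm
  have hpm : p < m := by
    rcases lt_trichotomy m p with hlt | heq | hgt
    · exfalso
      have hkm : k ≠ m := ne_of_gt (hlt.trans (hpj.trans hjk))
      have hst : Starts σ m :=
        ⟨j, k, hlt.trans hpj, hjk, by rw [hσm]; exact hgt_succ k hkm h1, h2⟩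
      exact hmp (huniq m hst)
    · exact absurd heq hmp
    · exact hgt
  obtain ⟨b, hb⟩ := exists_succAbove_eq hmp
  have hτb : τ b = w := by
    have h' : v.succAbove (τ b) = w.succ := by rw [← key, hb, hσm]
    by_cases hc : castSucc (τ b) < v
    · exfalso
      rw [succAbove_of_castSucc_lt _ _ hc] at h'
      have h'' := congrArg Fin.val h'
      have hc' := lt_def.mp hc
      rw [coe_castSucc, val_succ] at h''
      rw [coe_castSucc] at hc'
      omega
    · rw [succAbove_of_le_castSucc _ _ (not_lt.mp hc)] at h'
      exact succ_injective _ h'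
  have hble : p ≤ castSucc b := (lt_succAbove_iff_le_castSucc p b).mp (by rw [hb]; exact hpm)
  have hmb : m = b.succ := by rw [← hb, succAbove_of_le_castSucc _ _ hble]
  have hab_le : a ≤ b := by
    rw [← ha] at hble
    exact castSucc_le_castSucc_iff.mp hble
  have hmpos : ∀ t : Fin (n + 1), p < t → t ≠ m → (m : ℕ) = (p : ℕ) + 1 → m < t := by
    intro t hpt htm hmv
    have h1' := lt_def.mp hpt
    have h2' : (t : ℕ) ≠ (m : ℕ) := fun hc => htm (Fin.ext hc)
    rw [lt_def]
    omega
  have hab : a < b := by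
    rcases hab_le.lt_or_eq with h' | h'
    · exact h'
    · exfalso
      have hmval : (m : ℕ) = (p : ℕ) + 1 := by rw [hmb, val_succ, ← h', hpa_val]
      by_cases hjm : j = m
      · have hkv := lt_def.mp h1
        have hks : σ k < w.succ := by rw [← hσm, ← hjm]; exact h2
        have hks' := lt_def.mp hks
        rw [val_succ] at hks'
        omega
      · have hmj : m < j := hmpos j hpj (Ne.symm hjm ∘ Eq.symm) hmval
        have hkm : k ≠ m := ne_of_gt (hmj.trans hjk)
        have hst : Starts σ m :=
          ⟨j, k, hmj, hjk, by rw [hσm]; exact hgt_succ k hkm h1, h2⟩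
        exact hmp (huniq m hst)
  -- finally : w < τ a
  have hpa : p.succAbove a = a.succ := by
    rw [← ha, succAbove_castSucc_self]
  have hu : σ a.succ = v.succAbove (τ a) := by rw [← hpa]; exact key a
  have hasp : a.succ ≠ p := by
    rw [← ha]; exact (@castSucc_lt_succ _ a).ne'
  have hasm : a.succ ≠ m := by
    rw [hmb]; intro hc; exact hab.ne (succ_injective _ hc)
  have hsval : ((a.succ : Fin (n + 1)) : ℕ) = (p : ℕ) + 1 := by rw [val_succ, hpa_val]
  have hne_v : σ a.succ ≠ v := fun hcon => hasp (σ.injective (hcon.trans hv0))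
  have hnotlt : ¬ σ a.succ < v := by
    intro hlt
    have hjs : j ≠ a.succ := by
      intro hcon
      rw [hcon] at h2
      exact absurd (h1.trans (h2.trans hlt)) (lt_irrefl v)
    have hsj : a.succ < j := by
      have h1' := lt_def.mp hpj
      have h2' : (j : ℕ) ≠ ((a.succ : Fin (n + 1)) : ℕ) := fun hc => hjs (Fin.ext hc)
      rw [lt_def]
      omega
    exact hasp (huniq a.succ ⟨j, k, hsj, hjk, hlt.trans h1, h2⟩)
  have hvu : v < σ a.succ := by
    rcases lt_trichotomy (σ a.succ) v with h' | h' | h'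
    · exact absurd h' hnotlt
    · exact absurd h' hne_v
    · exact h'
  have hwu : w.succ < σ a.succ := hgt_succ a.succ hasm hvu
  have hτa : w < τ a := by
    have hle : v ≤ castSucc (τ a) := by
      by_contra hc
      rw [hu, succAbove_of_castSucc_lt _ _ (not_le.mp hc)] at hvu
      exact absurd (hvu.trans (not_le.mp hc)) (lt_irrefl v)
    rw [hu, succAbove_of_le_castSucc _ _ hle] at hwu
    exact succ_lt_succ_iff.mp hwu
  exact ⟨τ, a, b, hav, hab, by rw [hτb]; exact hτa, by rw [hτb, hw, ha]; exact hins⟩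
open Classical in
theorem stmt7 (n : ℕ) (hn : 1 ≤ n) :
    Nat.card {σ : Equiv.Perm (Fin (n + 1)) // pmpS132 σ = 1} =
      ∑ σ : Equiv.Perm (Fin n), if Avoids132 σ then inversions σ else 0 := by
  classical
  set D := (τ : Equiv.Perm (Fin n)) ×
    {pq : Fin n × Fin n // Avoids132 τ ∧ pq.1 < pq.2 ∧ τ pq.2 < τ pq.1} with hD
  let f : D → {σ : Equiv.Perm (Fin (n + 1)) // pmpS132 σ = 1} :=
    fun x => ⟨insertPerm (castSucc x.2.val.1) (castSucc (x.1 x.2.val.2)) x.1,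
      pmp_insert x.1 x.2.2.1 _ _ x.2.2.2.1 x.2.2.2.2⟩
  have hf : Function.Bijective f := by
    constructor
    · rintro ⟨τ, ⟨⟨a, b⟩, hav, hab, hvb⟩⟩ ⟨τ', ⟨⟨a', b'⟩, hav', hab', hvb'⟩⟩ hEq
      simp only [f, Subtype.mk.injEq] at hEq
      have haa' : a = a' := by
        apply castSucc_injective
        have h1 := (starts_insert_iff τ hav a b hab hvb (castSucc a)).mpr rfl
        rw [hEq] at h1
        exact (starts_insert_iff τ' hav' a' b' hab' hvb' (castSucc a)).mp h1
      subst haa'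
      have hvv : castSucc (τ b) = castSucc (τ' b') := by
        have := congrArg (fun e : Equiv.Perm (Fin (n + 1)) => e (castSucc a)) hEq
        simpa using this
      have hττ : τ = τ' := by
        apply Equiv.ext
        intro d
        have := congrArg
          (fun e : Equiv.Perm (Fin (n + 1)) => e ((castSucc a).succAbove d)) hEq
        simp only [insertPerm_succAbove] at this
        rw [← hvv] at this
        exact succAbove_right_injective this
      subst hττ
      have hbb : b = b' := τ.injective (castSucc_injective _ hvv)
      subst hbb
      rfl
    · rintro ⟨σ, hσ⟩
      obtain ⟨τ, a, b, hav, hab, hvb, hins⟩ := exists_preimage σ hσ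
      exact ⟨⟨τ, ⟨(a, b), hav, hab, hvb⟩⟩, Subtype.ext hins⟩
  rw [← Nat.card_eq_of_bijective f hf]
  rw [Nat.card_eq_fintype_card, Fintype.card_sigma]
  apply Finset.sum_congr rfl
  intro τ _
  by_cases h : Avoids132 τ
  · rw [if_pos h, inversions, Nat.card_eq_fintype_card]
    exact Fintype.card_congr (Equiv.subtypeEquivRight (fun pq => by simp [h]))
  · rw [if_neg h]
    haveI : IsEmpty {pq : Fin n × Fin n // Avoids132 τ ∧ pq.1 < pq.2 ∧ τ pq.2 < τ pq.1} :=
      ⟨fun x => h x.2.1⟩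
    exact Fintype.card_eq_zero
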